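/- (Step 2 of the parabolic maximum principle.) Let a be a deterministic balanced time-dependent environment with jump range U and let 𝒟 ⊂ ℤ^d × ℤ be finite with parabolic boundary 𝒟^p. Let u : 𝒟 ∪ 𝒟^p → ℝ. There is a constant C = C(d) such that for every (x,n) ∈ Γ (i.e., with I_u(x,n) ≠ ∅) with |conv(U_{x,n})| > 0, the Lebesgue measure of I_u(x,n) satisfies |I_u(x,n)| ≤ C (#U)^d (L*_a u(x,n))^d / |conv(U_{x,n})|, where L*_a u(x,n) := ∑_{z∈U, z≠0} a_n(x,z)(u(x,n) − u(x+z,n+1)). -/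

import Mathlib

open MeasureTheory

namespace ParabolicMaxStep2

abbrev Zd (d : ℕ) := Fin d → ℤ

/-- A (deterministic) time-dependent environment. -/
abbrev TEnv (d : ℕ) := ℕ → Zd d → Zd d → ℝ

/-- `a` is a balanced time-dependent environment with jump range `U`. -/
def IsBalancedEnv (d : ℕ) (U : Finset (Zd d)) (a : TEnv d) : Prop :=
  ∀ n x, (∀ z ∈ U, 0 < a n x z) ∧ (∀ z, z ∉ U → a n x z = 0) ∧
    (∑ z ∈ U, a n x z = 1) ∧ (∀ i, ∑ z ∈ U, (z i : ℝ) * a n x z = 0)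

/-- The parabolic boundary `𝒟^p`. -/
def pBoundary (d : ℕ) (a : TEnv d) (D : Finset (Zd d × ℕ)) : Set (Zd d × ℕ) :=
  {q | q ∉ D ∧ ∃ x n, (x, n) ∈ D ∧ q.2 = n + 1 ∧ 0 < a n x (q.1 - x)}

/-- `I_u(x,n)`: slopes `p` with `u(x,n) − u(y,m) ≥ p·(x−y)` for all
`(y,m) ∈ 𝒟 ∪ 𝒟^p` with `m > n`. -/
def Iset (d : ℕ) (a : TEnv d) (D : Finset (Zd d × ℕ)) (u : Zd d × ℕ → ℝ)
    (p : Zd d × ℕ) : Set (Fin d → ℝ) :=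
  {q | ∀ r ∈ (D : Set (Zd d × ℕ)) ∪ pBoundary d a D, p.2 < r.2 →
    ∑ i, q i * ((p.1 i - r.1 i : ℤ) : ℝ) ≤ u p - u r}

/-- `L*_a u(x,n) = ∑_{z ≠ 0} a_n(x,z)(u(x,n) − u(x+z,n+1))`. -/
def Lstar (d : ℕ) (U : Finset (Zd d)) (a : TEnv d) (u : Zd d × ℕ → ℝ)
    (p : Zd d × ℕ) : ℝ :=
  ∑ z ∈ U.erase 0, a p.2 p.1 z * (u p - u (p.1 + z, p.2 + 1))

/-- The set `U_{x,n} = {a_n(x,z) z : z ∈ U} ⊂ ℝ^d`. -/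
def Uxn (d : ℕ) (U : Finset (Zd d)) (a : TEnv d) (p : Zd d × ℕ) : Set (Fin d → ℝ) :=
  (fun z : Zd d => fun i => a p.2 p.1 z * (z i : ℝ)) '' (U : Set (Zd d))

/-- If every `d`-tuple of vectors from `w '' U` has zero determinant, then
the convex hull of `w '' U` has measure zero. -/
lemma aux_degenerate (d : ℕ) (U : Finset (Zd d)) (w : Zd d → (Fin d → ℝ))
    (hdetzero : ∀ t : Fin d → Zd d, (∀ j, t j ∈ U) →
      (Matrix.of fun i j => w (t j) i).det = 0) :
    volume (convexHull ℝ (w '' (U : Set (Zd d)))) = 0 := by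
  classical
  have hspan : Submodule.span ℝ (w '' (U : Set (Zd d))) ≠ ⊤ := by
    intro htop
    obtain ⟨b, hbsub, hbspan, hbindep⟩ := exists_linearIndependent ℝ (w '' (U : Set (Zd d)))
    rw [htop] at hbspan
    have hbfin : b.Finite := (((U : Set (Zd d)).toFinite.image w)).subset hbsub
    haveI := hbfin.fintype
    have hbasis : Module.Basis b ℝ (Fin d → ℝ) := Module.Basis.mk hbindep (by rw [Subtype.range_coe, hbspan])
    have hcard : Fintype.card b = d := by
      have := Module.finrank_eq_card_basis hbasis
      simpa [Module.finrank_pi] using this.symm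
    let e : Fin d ≃ b := (Fintype.equivFinOfCardEq hcard).symm
    have hv : ∀ j : Fin d, ∃ z ∈ U, w z = ((e j : b) : Fin d → ℝ) := by
      intro j
      obtain ⟨z, hz, hzw⟩ := hbsub (e j).2
      exact ⟨z, hz, hzw⟩
    choose z hzU hzw using hv
    have hindep : LinearIndependent ℝ (fun j : Fin d => ((e j : b) : Fin d → ℝ)) :=
      hbindep.comp e e.injective
    have hindep2 : LinearIndependent ℝ (fun j : Fin d => w (z j)) := by
      convert hindep using 1
      exact funext fun j => hzw j
    have hcols : LinearIndependent ℝ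
        (fun j => Matrix.transpose (Matrix.of fun i j' => w (z j') i) j) := by
      convert hindep2 using 2
      rfl
    have hunit : IsUnit (Matrix.of fun i j' => w (z j') i) :=
      Matrix.linearIndependent_cols_iff_isUnit.1 hcols
    have hdet : (Matrix.of fun i j' => w (z j') i).det ≠ 0 :=
      (Matrix.isUnit_iff_isUnit_det _).1 hunit |>.ne_zero
    exact hdet (hdetzero z hzU)
  have hsub : convexHull ℝ (w '' (U : Set (Zd d)))
      ⊆ (Submodule.span ℝ (w '' (U : Set (Zd d))) : Set (Fin d → ℝ)) :=
    convexHull_min Submodule.subset_span (Submodule.span ℝ _).convex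
  have h0 : volume ((Submodule.span ℝ (w '' (U : Set (Zd d)))) : Set (Fin d → ℝ)) = 0 :=
    Measure.addHaar_submodule volume _ hspan
  exact measure_mono_null hsub h0

/-- Measure bound for the convex hull via a maximal determinant. -/
lemma aux_hull_bound (d : ℕ) (V : Matrix (Fin d) (Fin d) ℝ) (hdet : V.det ≠ 0)
    (S : Set (Fin d → ℝ))
    (hS : ∀ v ∈ S, ∀ j, |(V.updateCol j v).det| ≤ |V.det|) :
    volume (convexHull ℝ S) ≤ ENNReal.ofReal |V.det| * ENNReal.ofReal 2 ^ d := by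
  classical
  have hsub : S ⊆ Matrix.toLin' V '' (Set.pi Set.univ fun _ => Set.Icc (-1 : ℝ) 1) := by
    intro v hv
    refine ⟨(V.det)⁻¹ • Matrix.cramer V v, ?_, ?_⟩
    · intro j _
      have h1 : |((V.det)⁻¹ • Matrix.cramer V v) j| ≤ 1 := by
        rw [Pi.smul_apply, smul_eq_mul, abs_mul, abs_inv, Matrix.cramer_apply]
        have h2 := hS v hv j
        have h3 : (0:ℝ) < |V.det| := abs_pos.2 hdet
        rw [inv_mul_le_iff₀ h3]
        linarith
      exact abs_le.1 h1
    · have h4 : Matrix.toLin' V ((V.det)⁻¹ • Matrix.cramer V v)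
          = (V.det)⁻¹ • (Matrix.mulVec V (Matrix.cramer V v)) := by
        rw [_root_.map_smul]; rfl
      rw [h4, Matrix.mulVec_cramer, smul_smul, inv_mul_cancel₀ hdet, one_smul]
  have hconv : convexHull ℝ S ⊆ Matrix.toLin' V '' (Set.pi Set.univ fun _ => Set.Icc (-1 : ℝ) 1) :=
    convexHull_min hsub ((convex_pi fun i _ => convex_Icc _ _).linear_image _)
  calc volume (convexHull ℝ S)
      ≤ volume (Matrix.toLin' V '' (Set.pi Set.univ fun _ => Set.Icc (-1 : ℝ) 1)) :=
        measure_mono hconv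
    _ = ENNReal.ofReal |V.det| * ENNReal.ofReal 2 ^ d := by
        rw [Measure.addHaar_image_linearMap, LinearMap.det_toLin', volume_pi_pi]
        simp [Real.volume_Icc]
        norm_num

/-- Measure bound for a set trapped in a slab system. -/
lemma aux_slab_bound (d : ℕ) (V : Matrix (Fin d) (Fin d) ℝ) (hdet : V.det ≠ 0)
    (I : Set (Fin d → ℝ)) (q0 : Fin d → ℝ) (L : ℝ)
    (hk : ∀ q ∈ I, ∀ j, |∑ i, (q i - q0 i) * V i j| ≤ L) :
    volume I ≤ ENNReal.ofReal |V.det|⁻¹ * ENNReal.ofReal (2 * L) ^ d := by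
  classical
  have hsub : I ⊆ (fun y => y - q0) ⁻¹'
      (Matrix.toLin' V.transpose ⁻¹' (Set.pi Set.univ fun _ => Set.Icc (-L) L)) := by
    intro q hq
    simp only [Set.mem_preimage]
    intro j _
    have h1 : Matrix.toLin' V.transpose (q - q0) j = ∑ i, (q i - q0 i) * V i j := by
      show Matrix.mulVec V.transpose (q - q0) j = _
      rw [Matrix.mulVec]
      simp [dotProduct, Matrix.transpose_apply, mul_comm, Pi.sub_apply]
    rw [h1]
    exact abs_le.1 (hk q hq j)
  have hT : volume (Matrix.toLin' V.transpose ⁻¹' (Set.pi Set.univ fun _ => Set.Icc (-L) L))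
      = ENNReal.ofReal |V.det|⁻¹ * ENNReal.ofReal (2 * L) ^ d := by
    rw [Measure.addHaar_preimage_linearMap volume
      (by rw [LinearMap.det_toLin', Matrix.det_transpose]; exact hdet), LinearMap.det_toLin',
      Matrix.det_transpose, volume_pi_pi]
    simp only [Real.volume_Icc, abs_inv]
    rw [Finset.prod_const, Finset.card_univ, Fintype.card_fin]
    congr 2
    ring
  have htrans : volume ((fun y => y - q0) ⁻¹'
      (Matrix.toLin' V.transpose ⁻¹' (Set.pi Set.univ fun _ => Set.Icc (-L) L)))
      = volume (Matrix.toLin' V.transpose ⁻¹' (Set.pi Set.univ fun _ => Set.Icc (-L) L)) := by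
    have h2 : (fun y : Fin d → ℝ => y - q0) = fun y => y + (-q0) := by
      funext y; rw [sub_eq_add_neg]
    rw [h2]
    exact measure_preimage_add_right volume (-q0) _
  calc volume I ≤ _ := measure_mono hsub
    _ = _ := htrans
    _ = _ := hT

/-- **Step 2 of the parabolic maximum principle.**
There is `C = C(d)` such that for every `(x,n) ∈ Γ` (i.e. `I_u(x,n) ≠ ∅`) with
`|conv U_{x,n}| > 0`,
`|I_u(x,n)| ≤ C (#U)^d (L*_a u(x,n))^d / |conv U_{x,n}|`. -/
theorem step2_gradient_set_measure_bound (d : ℕ) (hd : 1 ≤ d) :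
    ∃ C : ℝ, 0 < C ∧
      ∀ (U : Finset (Zd d)), U.Nonempty →
      ∀ (a : TEnv d), IsBalancedEnv d U a →
      ∀ (D : Finset (Zd d × ℕ)) (u : Zd d × ℕ → ℝ) (p : Zd d × ℕ),
        p ∈ D → (Iset d a D u p).Nonempty →
        0 < (volume (convexHull ℝ (Uxn d U a p))).toReal →
        (volume (Iset d a D u p)).toReal ≤
          C * (U.card : ℝ) ^ d * (Lstar d U a u p) ^ d /
            (volume (convexHull ℝ (Uxn d U a p))).toReal := by
  classical
  refine ⟨4 ^ d, by positivity, ?_⟩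
  intro U hU a ha D u p hpD hIne hvol
  obtain ⟨q0, hq0⟩ := hIne
  obtain ⟨hpos, hzero, hsum1, hbal⟩ := ha p.2 p.1
  set α : Zd d → ℝ := a p.2 p.1 with hα
  set w : Zd d → (Fin d → ℝ) := fun z i => α z * (z i : ℝ) with hw
  set δ : Zd d → ℝ := fun z => u p - u (p.1 + z, p.2 + 1) with hδ
  set L : ℝ := Lstar d U a u p with hLs
  have hLdef : L = ∑ z ∈ U.erase 0, α z * δ z := rfl
  have hUxn : Uxn d U a p = w '' (U : Set (Zd d)) := rfl
  -- Step 1: the linear constraints coming from membership in `Iset`.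
  have hcon : ∀ q ∈ Iset d a D u p, ∀ z ∈ U, -(∑ i, q i * (z i : ℝ)) ≤ δ z := by
    intro q hq z hz
    have hmem : ((p.1 + z, p.2 + 1) : Zd d × ℕ) ∈ (D : Set (Zd d × ℕ)) ∪ pBoundary d a D := by
      by_cases h : ((p.1 + z, p.2 + 1) : Zd d × ℕ) ∈ D
      · exact Or.inl h
      · refine Or.inr ⟨h, p.1, p.2, hpD, rfl, ?_⟩
        have h2 : (p.1 + z) - p.1 = z := by abel
        rw [h2]
        exact hpos z hz
    have h2 := hq _ hmem (by simp)
    have h3 : ∑ i, q i * ((p.1 i - (p.1 + z) i : ℤ) : ℝ) = -(∑ i, q i * (z i : ℝ)) := by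
      rw [← Finset.sum_neg_distrib]
      refine Finset.sum_congr rfl fun i _ => ?_
      have h4 : (p.1 + z) i = p.1 i + z i := rfl
      rw [h4]
      push_cast
      ring
    rw [h3] at h2
    exact h2
  -- Step 2: the balance condition.
  have hsum0 : ∀ q : Fin d → ℝ, ∑ z ∈ U, α z * (∑ i, q i * (z i : ℝ)) = 0 := by
    intro q
    have h1 : ∀ z ∈ U, α z * (∑ i, q i * (z i : ℝ)) = ∑ i, q i * ((z i : ℝ) * α z) := by
      intro z _; rw [Finset.mul_sum]; exact Finset.sum_congr rfl fun i _ => by ring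
    rw [Finset.sum_congr rfl h1, Finset.sum_comm]
    refine Finset.sum_eq_zero fun i _ => ?_
    rw [← Finset.mul_sum, hbal i, mul_zero]
  have hsum0' : ∀ q : Fin d → ℝ, ∑ z ∈ U.erase 0, α z * (∑ i, q i * (z i : ℝ)) = 0 := by
    intro q
    rw [Finset.sum_erase, hsum0]
    simp
  -- Step 3: `L ≥ 0`.
  have hL0 : 0 ≤ L := by
    have hz0 : ∑ z ∈ U.erase 0, -(α z * (∑ i, q0 i * (z i : ℝ))) = 0 := by
      rw [Finset.sum_neg_distrib, hsum0', neg_zero]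
    rw [hLdef, ← hz0]
    refine Finset.sum_le_sum fun z hz => ?_
    have hzU := Finset.mem_of_mem_erase hz
    have h1 := hcon q0 hq0 z hzU
    have h2 := (hpos z hzU).le
    nlinarith [mul_le_mul_of_nonneg_left h1 h2]
  -- Step 4: the key slab estimate.
  have hkey : ∀ q ∈ Iset d a D u p, ∀ q' ∈ Iset d a D u p, ∀ z ∈ U,
      α z * (∑ i, (q i - q' i) * (z i : ℝ)) ≤ L := by
    intro q hq q' hq' z hz
    by_cases h0 : z = 0
    · subst h0
      have h1 : (∑ i, (q i - q' i) * ((0 : Zd d) i : ℝ)) = 0 := by simp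
      rw [h1, mul_zero]
      exact hL0
    have hz' : z ∈ U.erase 0 := Finset.mem_erase.2 ⟨h0, hz⟩
    have hαz := (hpos z hz).le
    have esub : ∑ i, (q i - q' i) * ((z i : ℤ) : ℝ)
        = (∑ i, q i * (z i : ℝ)) - ∑ i, q' i * (z i : ℝ) := by
      rw [← Finset.sum_sub_distrib]
      exact Finset.sum_congr rfl fun i _ => by ring
    have e1 : α z * (∑ i, q i * (z i : ℝ))
        + ∑ x ∈ (U.erase 0).erase z, α x * (∑ i, q i * (x i : ℝ)) = 0 := by
      have h := Finset.add_sum_erase (U.erase 0) (fun x => α x * (∑ i, q i * (x i : ℝ))) hz'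
      rw [hsum0' q] at h
      exact h
    have e2 : ∀ x ∈ (U.erase 0).erase z, -(α x * δ x) ≤ α x * (∑ i, q i * (x i : ℝ)) := by
      intro x hx
      have hxU := Finset.mem_of_mem_erase (Finset.mem_of_mem_erase hx)
      have h1 := hcon q hq x hxU
      have h2 := (hpos x hxU).le
      nlinarith [mul_le_mul_of_nonneg_left h1 h2]
    have e2' : ∑ x ∈ (U.erase 0).erase z, -(α x * δ x)
        ≤ ∑ x ∈ (U.erase 0).erase z, α x * (∑ i, q i * (x i : ℝ)) :=
      Finset.sum_le_sum e2
    have e3 : ∑ x ∈ (U.erase 0).erase z, α x * δ x = L - α z * δ z := by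
      have h := Finset.add_sum_erase (U.erase 0) (fun x => α x * δ x) hz'
      rw [← hLdef] at h
      have h2 : α z * δ z + ∑ x ∈ (U.erase 0).erase z, α x * δ x = L := h
      linarith
    have e4 : -(α z * (∑ i, q' i * (z i : ℝ))) ≤ α z * δ z := by
      have h1 := hcon q' hq' z hz
      nlinarith [mul_le_mul_of_nonneg_left h1 hαz]
    rw [Finset.sum_neg_distrib, e3] at e2'
    rw [esub, mul_sub]
    linarith
  -- Step 5: pick a maximizing tuple of columns.
  set F : (Fin d → Zd d) → ℝ := fun t => |(Matrix.of fun i j => w (t j) i).det| with hF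
  obtain ⟨t0, ht0mem, ht0max⟩ :=
    Finset.exists_max_image (Fintype.piFinset fun _ : Fin d => U) F hU.piFinset_const
  have ht0U : ∀ j, t0 j ∈ U := Fintype.mem_piFinset.1 ht0mem
  set V : Matrix (Fin d) (Fin d) ℝ := Matrix.of fun i j => w (t0 j) i with hV
  have hFV : F t0 = |V.det| := rfl
  -- Step 6: `|det V| > 0`.
  have hMpos : 0 < |V.det| := by
    rcases (abs_nonneg V.det).lt_or_eq with h | h
    · exact h
    exfalso
    have hdetzero : ∀ t : Fin d → Zd d, (∀ j, t j ∈ U) →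
        (Matrix.of fun i j => w (t j) i).det = 0 := by
      intro t ht
      have h1 := ht0max t (Fintype.mem_piFinset.2 ht)
      rw [hFV, ← h] at h1
      exact abs_eq_zero.1 (le_antisymm h1 (abs_nonneg _))
    have h2 := aux_degenerate d U w hdetzero
    rw [hUxn, h2] at hvol
    simp at hvol
  have hdet : V.det ≠ 0 := fun h => by rw [h, abs_zero] at hMpos; exact lt_irrefl 0 hMpos
  -- Step 7: bound the volume of the convex hull.
  have hS : ∀ v ∈ Uxn d U a p, ∀ j, |(V.updateCol j v).det| ≤ |V.det| := by
    rw [hUxn]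
    rintro v ⟨z, hzU, rfl⟩ j
    have hupd : V.updateCol j (w z)
        = Matrix.of fun i j' => w (Function.update t0 j z j') i := by
      ext i j'
      rw [Matrix.updateCol_apply]
      by_cases h : j' = j
      · simp [h]
      · simp [h, Function.update_apply, hV]
    rw [hupd]
    have hmem : (Function.update t0 j z) ∈ Fintype.piFinset fun _ : Fin d => U := by
      refine Fintype.mem_piFinset.2 fun j' => ?_
      by_cases h : j' = j
      · subst h; simpa using hzU
      · simp [Function.update_apply, h, ht0U j']
    exact ht0max _ hmem
  have hhull : volume (convexHull ℝ (Uxn d U a p))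
      ≤ ENNReal.ofReal |V.det| * ENNReal.ofReal 2 ^ d := by
    rw [hUxn] at hS ⊢
    exact aux_hull_bound d V hdet _ hS
  -- Step 8: bound the volume of `Iset`.
  have hk : ∀ q ∈ Iset d a D u p, ∀ j, |∑ i, (q i - q0 i) * V i j| ≤ L := by
    intro q hq j
    have hfac : ∀ (y : Fin d → ℝ) (z : Zd d),
        ∑ i, y i * w z i = α z * ∑ i, y i * (z i : ℝ) := by
      intro y z
      rw [Finset.mul_sum]
      refine Finset.sum_congr rfl fun i _ => ?_
      rw [hw]
      ring
    have hVij : ∀ i, V i j = w (t0 j) i := fun i => rfl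
    have h1 : ∑ i, (q i - q0 i) * V i j = α (t0 j) * ∑ i, (q i - q0 i) * ((t0 j) i : ℝ) := by
      rw [← hfac]
      exact Finset.sum_congr rfl fun i _ => by rw [hVij]
    have hub := hkey q hq q0 hq0 (t0 j) (ht0U j)
    have hlb := hkey q0 hq0 q hq (t0 j) (ht0U j)
    have hneg : ∑ i, (q0 i - q i) * ((t0 j) i : ℝ)
        = -∑ i, (q i - q0 i) * ((t0 j) i : ℝ) := by
      rw [← Finset.sum_neg_distrib]
      exact Finset.sum_congr rfl fun i _ => by ring
    rw [hneg] at hlb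
    rw [h1]
    refine abs_le.2 ⟨?_, hub⟩
    nlinarith
  have hslab : volume (Iset d a D u p)
      ≤ ENNReal.ofReal |V.det|⁻¹ * ENNReal.ofReal (2 * L) ^ d :=
    aux_slab_bound d V hdet _ q0 L hk
  -- Step 9: pass to real numbers.
  set M : ℝ := |V.det| with hM
  have hvI : (volume (Iset d a D u p)).toReal ≤ M⁻¹ * (2 * L) ^ d := by
    have hne : ENNReal.ofReal M⁻¹ * ENNReal.ofReal (2 * L) ^ d ≠ ⊤ :=
      ENNReal.mul_ne_top ENNReal.ofReal_ne_top (ENNReal.pow_ne_top ENNReal.ofReal_ne_top)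
    have h1 := ENNReal.toReal_mono hne hslab
    rwa [ENNReal.toReal_mul, ENNReal.toReal_pow, ENNReal.toReal_ofReal (by positivity),
      ENNReal.toReal_ofReal (by linarith)] at h1
  have hvC : (volume (convexHull ℝ (Uxn d U a p))).toReal ≤ M * 2 ^ d := by
    have hne : ENNReal.ofReal M * ENNReal.ofReal 2 ^ d ≠ ⊤ :=
      ENNReal.mul_ne_top ENNReal.ofReal_ne_top (ENNReal.pow_ne_top ENNReal.ofReal_ne_top)
    have h1 := ENNReal.toReal_mono hne hhull
    rwa [ENNReal.toReal_mul, ENNReal.toReal_pow, ENNReal.toReal_ofReal hMpos.le,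
      ENNReal.toReal_ofReal (by norm_num)] at h1
  -- Step 10: conclude by arithmetic.
  rw [le_div_iff₀ hvol]
  have hvI0 : 0 ≤ (volume (Iset d a D u p)).toReal := ENNReal.toReal_nonneg
  have hN1 : (1 : ℝ) ≤ (U.card : ℝ) ^ d := by
    have h1 : (1 : ℝ) ≤ (U.card : ℝ) := by
      exact_mod_cast Nat.one_le_iff_ne_zero.2 (Finset.card_ne_zero_of_mem hU.choose_spec)
    exact one_le_pow₀ h1
  have key : (volume (Iset d a D u p)).toReal
      * (volume (convexHull ℝ (Uxn d U a p))).toReal ≤ 4 ^ d * L ^ d := by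
    calc (volume (Iset d a D u p)).toReal * (volume (convexHull ℝ (Uxn d U a p))).toReal
        ≤ (M⁻¹ * (2 * L) ^ d) * (M * 2 ^ d) := by
          refine mul_le_mul hvI hvC ENNReal.toReal_nonneg ?_
          exact mul_nonneg (inv_nonneg.2 hMpos.le) (pow_nonneg (by linarith) d)
      _ = (M⁻¹ * M) * ((2 ^ d * 2 ^ d) * L ^ d) := by
          rw [mul_pow]; ring
      _ = 4 ^ d * L ^ d := by
          rw [inv_mul_cancel₀ (ne_of_gt hMpos), one_mul, ← mul_pow]
          norm_num
  have hfin : 4 ^ d * L ^ d ≤ 4 ^ d * (U.card : ℝ) ^ d * L ^ d := by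
    have h2 : (0:ℝ) ≤ 4 ^ d * L ^ d :=
      mul_nonneg (pow_nonneg (by norm_num) d) (pow_nonneg hL0 d)
    nlinarith [mul_le_mul_of_nonneg_left hN1 h2]
  linarith

end ParabolicMaxStep2
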